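/- Let $D_0$ be a negative fundamental discriminant and $D$ a positive discriminant, and let $Q(x,y) = Ax^2 + Bxy + Cy^2$ be an integral binary quadratic form of discriminant $D_0 D$. If $D_0 = D_0' D_0''$ and $D_0 = E_0' E_0''$ are two factorizations of $D_0$ into discriminants with $\gcd(D_0', A) = \gcd(D_0'', C) = 1$ and $\gcd(E_0', A) = \gcd(E_0'', C) = 1$, then $\left(\frac{D_0'}{A}\right)\left(\frac{D_0''}{C}\right) = \left(\frac{E_0'}{A}\right)\left(\frac{E_0''}{C}\right)$; hence the genus character $\chi_{D_0}(Q)$ is well defined. -/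

import Mathlib

/-- The Kronecker symbol `(a/n)`, extending the Jacobi symbol by
`(a/2) = 0, 1, -1` according as `a` is even, `a ≡ ±1 mod 8`, or `a ≡ ±3 mod 8`,
with sign factor for negative `n` and `(a , 0) = 1` iff `a = ±1`. -/
noncomputable def kronecker (a n : ℤ) : ℤ :=
  if n = 0 then (if a = 1 ∨ a = -1 then 1 else 0)
  else
    (if n < 0 ∧ a < 0 then -1 else 1) *
      (if a % 2 = 0 then 0 else if a % 8 = 1 ∨ a % 8 = 7 then 1 else -1) ^
        n.natAbs.factorization 2 *
      jacobiSym a (n.natAbs / 2 ^ n.natAbs.factorization 2)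

private def kchi (a : ℤ) : ℤ :=
  if a % 2 = 0 then 0 else if a % 8 = 1 ∨ a % 8 = 7 then 1 else -1

private lemma kronecker_def {a n : ℤ} (hn : n ≠ 0) :
    kronecker a n = (if n < 0 ∧ a < 0 then -1 else 1) *
      kchi a ^ n.natAbs.factorization 2 *
      jacobiSym a (n.natAbs / 2 ^ n.natAbs.factorization 2) := by
  rw [kronecker, if_neg hn]; rfl

private lemma kchi_dep (a : ℤ) : kchi a = kchi (a % 8) := by
  unfold kchi
  rw [Int.emod_emod_of_dvd a (by norm_num : (2:ℤ) ∣ 8), Int.emod_emod_of_dvd a (by norm_num : (8:ℤ) ∣ 8)]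

private lemma kchi_mul (a b : ℤ) : kchi (a * b) = kchi a * kchi b := by
  rw [kchi_dep (a*b), kchi_dep a, kchi_dep b, Int.mul_emod a b 8]
  have ha0 : 0 ≤ a % 8 := Int.emod_nonneg a (by norm_num)
  have ha8 : a % 8 < 8 := Int.emod_lt_of_pos a (by norm_num)
  have hb0 : 0 ≤ b % 8 := Int.emod_nonneg b (by norm_num)
  have hb8 : b % 8 < 8 := Int.emod_lt_of_pos b (by norm_num)
  set r := a % 8 with hr
  set s := b % 8 with hs
  clear_value r s
  interval_cases r <;> interval_cases s <;> decide

private lemma ksign_mul {a b : ℤ} (ha : a ≠ 0) (hb : b ≠ 0) (n : ℤ) :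
    (if n < 0 ∧ a * b < 0 then (-1:ℤ) else 1) =
      (if n < 0 ∧ a < 0 then (-1:ℤ) else 1) * (if n < 0 ∧ b < 0 then (-1:ℤ) else 1) := by
  by_cases hn : n < 0
  · rcases ha.lt_or_gt with ha' | ha' <;> rcases hb.lt_or_gt with hb' | hb' <;>
      simp only [hn, true_and]
    · have h : 0 < a * b := mul_pos_of_neg_of_neg ha' hb'
      simp [ha', hb', h.not_gt]
    · have h : a * b < 0 := mul_neg_of_neg_of_pos ha' hb'
      simp [ha', asymm hb', h]
    · have h : a * b < 0 := mul_neg_of_pos_of_neg ha' hb'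
      simp [hb', asymm ha', h]
    · have h : 0 < a * b := mul_pos ha' hb'
      simp [asymm ha', asymm hb', h.not_gt]
  · simp [hn]

private lemma kronecker_mul_left {a b : ℤ} (ha : a ≠ 0) (hb : b ≠ 0) {n : ℤ} (hn : n ≠ 0) :
    kronecker (a * b) n = kronecker a n * kronecker b n := by
  rw [kronecker_def hn, kronecker_def hn, kronecker_def hn, kchi_mul, mul_pow,
    jacobiSym.mul_left, ksign_mul ha hb n]
  ring

private lemma gcd_two_eq_one_of_odd {n : ℤ} (h : Odd n) : Int.gcd 2 n = 1 := by
  rw [← Int.isCoprime_iff_gcd_eq_one]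
  exact (Int.prime_two.coprime_iff_not_dvd).mpr (by have := Int.odd_iff.mp h; omega)

private lemma kronecker_sq_eq_one {a n : ℤ} (h : Int.gcd a n = 1) (hn : n ≠ 0) :
    kronecker a n ^ 2 = 1 := by
  rw [kronecker_def hn, mul_pow, mul_pow, ← pow_mul]
  have hsign : ((if n < 0 ∧ a < 0 then (-1:ℤ) else 1)) ^ 2 = 1 := by
    split <;> norm_num
  have hj : jacobiSym a (n.natAbs / 2 ^ n.natAbs.factorization 2) ^ 2 = 1 := by
    apply jacobiSym.sq_one
    have hd : n.natAbs / 2 ^ n.natAbs.factorization 2 ∣ n.natAbs := Nat.ordCompl_dvd _ _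
    exact Nat.Coprime.coprime_dvd_right hd h
  rw [hsign, hj, one_mul, mul_one]
  rcases Int.even_or_odd a with he | ho
  · have h2 : ¬ (2 ∣ n.natAbs) := by
      intro h2
      have h2a : 2 ∣ a.natAbs := by
        obtain ⟨r, hr⟩ := he
        have h2' : (2:ℤ) ∣ a := ⟨r, by rw [hr]; ring⟩
        exact Int.natAbs_dvd_natAbs.mpr h2'
      have := Nat.dvd_gcd h2a h2
      rw [Int.gcd] at h
      omega
    rw [Nat.factorization_eq_zero_of_not_dvd h2]
    norm_num
  · have : kchi a ^ 2 = 1 := by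
      unfold kchi
      rw [Int.odd_iff.mp ho]
      split <;> simp_all
    rw [pow_mul', this, one_pow]

private lemma kronecker_abs {a n : ℤ} (hn : n ≠ 0) :
    kronecker a n = (if n < 0 ∧ a < 0 then (-1:ℤ) else 1) * kronecker a |n| := by
  have habs : |n| ≠ 0 := abs_ne_zero.mpr hn
  rw [kronecker_def hn, kronecker_def habs, Int.natAbs_abs]
  have : ¬ (|n| < 0 ∧ a < 0) := by
    rintro ⟨h, -⟩; exact absurd h (abs_nonneg n).not_gt
  rw [if_neg this]
  ring

private lemma kronecker_mul_right_pos (a : ℤ) {m n : ℤ} (hm : 0 < m) (hn : 0 < n) :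
    kronecker a (m * n) = kronecker a m * kronecker a n := by
  have hmn : 0 < m * n := mul_pos hm hn
  rw [kronecker_def hmn.ne', kronecker_def hm.ne', kronecker_def hn.ne']
  rw [if_neg (by rintro ⟨h, -⟩; exact absurd h hmn.not_gt),
    if_neg (by rintro ⟨h, -⟩; exact absurd h hm.not_gt),
    if_neg (by rintro ⟨h, -⟩; exact absurd h hn.not_gt)]
  have h1 : (m * n).natAbs = m.natAbs * n.natAbs := Int.natAbs_mul m n
  have hm0 : m.natAbs ≠ 0 := Int.natAbs_ne_zero.mpr hm.ne'
  have hn0 : n.natAbs ≠ 0 := Int.natAbs_ne_zero.mpr hn.ne'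
  rw [h1, Nat.ordCompl_mul, Nat.factorization_mul hm0 hn0]
  simp only [Finsupp.add_apply]
  rw [pow_add, jacobiSym.mul_right' a (Nat.ordCompl_pos 2 hm0).ne' (Nat.ordCompl_pos 2 hn0).ne']
  ring

private lemma kronecker_odd {a n : ℤ} (ho : Odd n) (hn : 0 < n) :
    kronecker a n = jacobiSym a n.natAbs := by
  rw [kronecker_def hn.ne']
  rw [if_neg (by rintro ⟨h, -⟩; exact absurd h hn.not_gt)]
  have h2 : ¬ (2 ∣ n.natAbs) := by
    have := Nat.odd_iff.mp (Int.natAbs_odd.mpr ho); omega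
  rw [Nat.factorization_eq_zero_of_not_dvd h2]
  norm_num

open ZMod in
private lemma jacobi_flip {d : ℤ} (hd : d % 4 = 1) {m : ℕ} (hm : Odd m) :
    jacobiSym d m = jacobiSym m d.natAbs := by
  have hd0 : d ≠ 0 := by intro h; rw [h] at hd; norm_num at hd
  set w := d.natAbs with hw
  rcases Int.natAbs_eq d with he | he
  · have hw4 : w % 4 = 1 := by
      have : ((w : ℤ)) % 4 = 1 := by rw [← he]; exact hd
      omega
    rw [he]
    exact jacobiSym.quadratic_reciprocity_one_mod_four hw4 hm
  · have hw4 : w % 4 = 3 := by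
      have : (-(w : ℤ)) % 4 = 1 := by rw [← he]; exact hd
      omega
    have hwodd : Odd w := by rw [Nat.odd_iff]; omega
    rw [he, jacobiSym.neg _ hm]
    rcases Nat.odd_mod_four_iff.mp (Nat.odd_iff.mp hm) with hm4 | hm4
    · rw [χ₄_nat_one_mod_four hm4, one_mul]
      exact jacobiSym.quadratic_reciprocity_one_mod_four' hwodd hm4
    · rw [χ₄_nat_three_mod_four hm4, jacobiSym.quadratic_reciprocity_three_mod_four hw4 hm4]
      ring

open ZMod in
private lemma kchi_eq_at_two {d : ℤ} (hodd : Odd d) : kchi d = jacobiSym 2 d.natAbs := by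
  have hwodd : Odd d.natAbs := Int.natAbs_odd.mpr hodd
  have h2 : d % 2 = 1 := Int.odd_iff.mp hodd
  have hw2 : d.natAbs % 2 = 1 := Nat.odd_iff.mp hwodd
  rw [jacobiSym.at_two hwodd, χ₈_nat_eq_if_mod_eight]
  unfold kchi
  have key : (d % 8 = 1 ∨ d % 8 = 7) ↔ (d.natAbs % 8 = 1 ∨ d.natAbs % 8 = 7) := by omega
  by_cases hc : d % 8 = 1 ∨ d % 8 = 7
  · rw [if_neg (by omega : ¬ d % 2 = 0), if_pos hc, if_neg (by omega : ¬ d.natAbs % 2 = 0),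
      if_pos (key.mp hc)]
  · rw [if_neg (by omega : ¬ d % 2 = 0), if_neg hc, if_neg (by omega : ¬ d.natAbs % 2 = 0),
      if_neg (fun h => hc (key.mpr h))]

private lemma jacobi_split (ν w : ℕ) :
    jacobiSym (ν : ℤ) w =
      jacobiSym 2 w ^ ν.factorization 2 * jacobiSym ((ν / 2 ^ ν.factorization 2 : ℕ) : ℤ) w := by
  conv_lhs => rw [← Nat.ordProj_mul_ordCompl_eq_self ν 2]
  push_cast
  rw [jacobiSym.mul_left, jacobiSym.pow_left]

private lemma kronecker_one_mod_four {d : ℤ} (hd : d % 4 = 1) {n : ℤ} (hn : 0 < n) :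
    kronecker d n = jacobiSym n d.natAbs := by
  have hodd : Odd d := by rw [Int.odd_iff]; omega
  have hν0 : n.natAbs ≠ 0 := Int.natAbs_ne_zero.mpr hn.ne'
  have hmodd : Odd (n.natAbs / 2 ^ n.natAbs.factorization 2) := by
    have := Nat.not_dvd_ordCompl Nat.prime_two hν0
    rw [Nat.odd_iff]; omega
  have hn' : n = ((n.natAbs : ℕ) : ℤ) := (Int.natAbs_of_nonneg hn.le).symm
  rw [kronecker_def hn.ne', if_neg (by rintro ⟨h, -⟩; exact absurd h hn.not_gt),
    kchi_eq_at_two hodd, jacobi_flip hd hmodd]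
  conv_rhs => rw [hn', jacobi_split]
  ring

private lemma jacobi_sq_mod {w : ℕ} {n x : ℤ} (hdvd : (w:ℤ) ∣ x ^ 2 - n)
    (hcop : Int.gcd x w = 1) : jacobiSym n w = 1 := by
  obtain ⟨k, hk⟩ := hdvd
  have hmod : n % w = x ^ 2 % w := by
    have : n = x ^ 2 - (w : ℤ) * k := by linarith
    rw [this, Int.sub_emod, Int.mul_emod_right]
    simp [Int.emod_emod_of_dvd]
  rw [jacobiSym.mod_left' hmod, jacobiSym.sq_one' hcop]

private lemma cop_of_sq {d m x : ℤ} (hc : IsCoprime d m) (hdvd : d ∣ x ^ 2 - m) :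
    IsCoprime d x := by
  obtain ⟨k, hk⟩ := hdvd
  have hx2 : x * x = m + d * k := by nlinarith [hk]
  have : IsCoprime d (x * x) := by
    rw [hx2]; exact hc.add_mul_left_right k
  exact this.of_mul_right_left

private lemma isCoprime_two_of_odd {n : ℤ} (h : Odd n) : IsCoprime (2:ℤ) n :=
  (Int.prime_two.coprime_iff_not_dvd).mpr (by have := Int.odd_iff.mp h; omega)

private lemma gcd_flip {d x : ℤ} (hcx : IsCoprime d x) : Int.gcd x (d.natAbs : ℤ) = 1 := by
  have h : Int.gcd d x = 1 := Int.isCoprime_iff_gcd_eq_one.mp hcx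
  rw [Int.gcd] at h ⊢
  rw [Int.natAbs_natCast, Nat.gcd_comm]
  exact h

private lemma final_one_mod_four {d n x : ℤ} (hd : d % 4 = 1) (hn : 0 < n)
    (hcop : IsCoprime d n) (hdvd : d ∣ x ^ 2 - 4 * n) : kronecker d n = 1 := by
  have hodd : Odd d := by rw [Int.odd_iff]; omega
  have h2 : IsCoprime d 2 := (isCoprime_two_of_odd hodd).symm
  have h4 : IsCoprime d 4 := by
    have h := h2.mul_right h2
    norm_num at h
    exact h
  have hc4 : IsCoprime d (4 * n) := h4.mul_right hcop
  have hcx : IsCoprime d x := cop_of_sq hc4 hdvd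
  have hgx : Int.gcd x (d.natAbs : ℤ) = 1 := gcd_flip hcx
  have hw : ((d.natAbs : ℤ)) ∣ x ^ 2 - 4 * n := (Int.natAbs_dvd).mpr hdvd
  have hg2 : Int.gcd (2:ℤ) (d.natAbs : ℤ) = 1 := gcd_flip h2
  rw [kronecker_one_mod_four hd hn]
  calc jacobiSym n d.natAbs
      = jacobiSym 4 d.natAbs * jacobiSym n d.natAbs := by
        rw [show ((4:ℤ)) = 2 ^ 2 by norm_num, jacobiSym.sq_one' hg2, one_mul]
    _ = jacobiSym (4 * n) d.natAbs := (jacobiSym.mul_left 4 n _).symm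
    _ = 1 := jacobi_sq_mod hw hgx

private lemma final_three_mod_four {d n x : ℤ} (hd : d % 4 = 3) (hn : 0 < n)
    (hn4 : n % 4 = 1) (hcop : IsCoprime d n) (hdvd : d ∣ x ^ 2 - n) : kronecker d n = 1 := by
  have hnodd : Odd n := by rw [Int.odd_iff]; omega
  have hcx : IsCoprime d x := cop_of_sq hcop hdvd
  have hgx : Int.gcd x (d.natAbs : ℤ) = 1 := gcd_flip hcx
  have hw : ((d.natAbs : ℤ)) ∣ x ^ 2 - n := (Int.natAbs_dvd).mpr hdvd
  have hJ : jacobiSym n d.natAbs = 1 := jacobi_sq_mod hw hgx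
  have hνn : ((n.natAbs : ℕ) : ℤ) = n := Int.natAbs_of_nonneg hn.le
  have hν4 : n.natAbs % 4 = 1 := by omega
  have hνodd : Odd n.natAbs := by rw [Nat.odd_iff]; omega
  rw [kronecker_odd hnodd hn]
  rcases Int.natAbs_eq d with he | he
  · have hw4 : d.natAbs % 4 = 3 := by omega
    rw [he, jacobiSym.quadratic_reciprocity_one_mod_four' (by rw [Nat.odd_iff]; omega) hν4,
      hνn]
    exact hJ
  · have hw4 : d.natAbs % 4 = 1 := by omega
    rw [he, jacobiSym.neg _ hνodd, ZMod.χ₄_nat_one_mod_four hν4, one_mul,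
      jacobiSym.quadratic_reciprocity_one_mod_four hw4 hνodd, hνn]
    exact hJ

private lemma final_even {u n x D' : ℤ} (hu : Odd u) (hn : 0 < n)
    (hcop : IsCoprime (2 * u) n) (hdvd : u ∣ x ^ 2 - n)
    (hD' : D' % 4 = 0 ∨ D' % 4 = 1) (hcong : (n + 2 * u * D') % 8 = 1) :
    kronecker (2 * u) n = 1 := by
  have h2n : IsCoprime (2:ℤ) n := hcop.of_mul_left_left
  have hnodd : Odd n := by
    rw [Int.odd_iff]
    rcases Int.even_or_odd n with hev | ho
    · exfalso
      obtain ⟨r, hr⟩ := hev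
      have hdd : (2:ℤ) ∣ n := ⟨r, by rw [hr]; ring⟩
      have := h2n.isUnit_of_dvd' dvd_rfl hdd
      rw [Int.isUnit_iff] at this
      omega
    · exact Int.odd_iff.mp ho
  have hcu : IsCoprime u n := hcop.of_mul_left_right
  have hcx : IsCoprime u x := cop_of_sq hcu hdvd
  have hgx : Int.gcd x (u.natAbs : ℤ) = 1 := gcd_flip hcx
  have hw : ((u.natAbs : ℤ)) ∣ x ^ 2 - n := (Int.natAbs_dvd).mpr hdvd
  have hJ : jacobiSym n u.natAbs = 1 := jacobi_sq_mod hw hgx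
  have hνn : ((n.natAbs : ℕ) : ℤ) = n := Int.natAbs_of_nonneg hn.le
  have hνodd : Odd n.natAbs := Int.natAbs_odd.mpr hnodd
  have hwodd : Odd u.natAbs := Int.natAbs_odd.mpr hu
  have hwodd' : u.natAbs % 2 = 1 := Nat.odd_iff.mp hwodd
  rw [kronecker_odd hnodd hn, jacobiSym.mul_left, jacobiSym.at_two hνodd]
  have hn8 : n % 8 = 1 ∨ (n % 8 = 7 ∧ u % 4 = 1) ∨ (n % 8 = 3 ∧ u % 4 = 3) := by
    have hcong' : (n + 2 * (u * D')) % 8 = 1 := by rw [← mul_assoc]; exact hcong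
    have hz : (u * D') % 4 = (u % 4 * (D' % 4)) % 4 := Int.mul_emod u D' 4
    have hu4 : u % 4 = 1 ∨ u % 4 = 3 := by have := Int.odd_iff.mp hu; omega
    rcases hD' with h | h <;> rcases hu4 with h' | h' <;> rw [h, h'] at hz <;>
      norm_num at hz <;> omega
  rcases hn8 with hn8 | ⟨hn8, hu4⟩ | ⟨hn8, hu4⟩
  · -- n ≡ 1 mod 8
    have hν8 : n.natAbs % 8 = 1 := by omega
    have hν4 : n.natAbs % 4 = 1 := by omega
    rw [ZMod.χ₈_nat_eq_if_mod_eight, if_neg (by omega), if_pos (by omega : n.natAbs % 8 = 1 ∨ n.natAbs % 8 = 7), one_mul]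
    rcases Int.natAbs_eq u with he | he
    · rw [he, jacobiSym.quadratic_reciprocity_one_mod_four' hwodd hν4, hνn]
      exact hJ
    · rw [he, jacobiSym.neg _ hνodd, ZMod.χ₄_nat_one_mod_four hν4, one_mul,
        jacobiSym.quadratic_reciprocity_one_mod_four' hwodd hν4, hνn]
      exact hJ
  · -- n ≡ 7 mod 8, u ≡ 1 mod 4
    have hν8 : n.natAbs % 8 = 7 := by omega
    have hν4 : n.natAbs % 4 = 3 := by omega
    rw [ZMod.χ₈_nat_eq_if_mod_eight, if_neg (by omega), if_pos (by omega : n.natAbs % 8 = 1 ∨ n.natAbs % 8 = 7), one_mul]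
    rcases Int.natAbs_eq u with he | he
    · have hw4 : u.natAbs % 4 = 1 := by omega
      rw [he, jacobiSym.quadratic_reciprocity_one_mod_four hw4 hνodd, hνn]
      exact hJ
    · have hw4 : u.natAbs % 4 = 3 := by omega
      rw [he, jacobiSym.neg _ hνodd, ZMod.χ₄_nat_three_mod_four hν4,
        jacobiSym.quadratic_reciprocity_three_mod_four hw4 hν4, hνn, hJ]
      ring
  · -- n ≡ 3 mod 8, u ≡ 3 mod 4
    have hν8 : n.natAbs % 8 = 3 := by omega
    have hν4 : n.natAbs % 4 = 3 := by omega
    rw [ZMod.χ₈_nat_eq_if_mod_eight, if_neg (by omega),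
      if_neg (by omega : ¬ (n.natAbs % 8 = 1 ∨ n.natAbs % 8 = 7))]
    rcases Int.natAbs_eq u with he | he
    · have hw4 : u.natAbs % 4 = 3 := by omega
      rw [he, jacobiSym.quadratic_reciprocity_three_mod_four hw4 hν4, hνn, hJ]
      ring
    · have hw4 : u.natAbs % 4 = 1 := by omega
      rw [he, jacobiSym.neg _ hνodd, ZMod.χ₄_nat_three_mod_four hν4,
        jacobiSym.quadratic_reciprocity_one_mod_four hw4 hνodd, hνn, hJ]
      ring

private lemma odd_sq_mod8 {b : ℤ} (h : b % 2 = 1) : b ^ 2 % 8 = 1 := by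
  obtain ⟨k, hk⟩ : ∃ k, b = 2 * k + 1 := ⟨b / 2, by omega⟩
  have h2 : b ^ 2 = 4 * (k * (k + 1)) + 1 := by rw [hk]; ring
  obtain ⟨m, hm⟩ := Int.even_mul_succ_self k
  omega

private lemma sq_mod4 (b : ℤ) : b ^ 2 % 4 = 0 ∨ b ^ 2 % 4 = 1 := by
  rcases Int.even_or_odd b with ⟨c, hc⟩ | hodd
  · left
    have : b ^ 2 = 4 * c ^ 2 := by rw [hc]; ring
    omega
  · right
    have := odd_sq_mod8 (Int.odd_iff.mp hodd)
    omega

private lemma no_2w {w u b : ℤ} (hw : w % 2 = 1) (hu : u % 2 = 1) (h : 2 * w = b ^ 2 * u) :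
    False := by
  rcases Int.even_or_odd b with ⟨c, hc⟩ | hodd
  · obtain ⟨s, hs⟩ : ∃ s, 2 * w = 4 * s := ⟨c ^ 2 * u, by rw [h, hc]; ring⟩
    omega
  · have ho2 : Odd (b ^ 2 * u) := (hodd.pow).mul (Int.odd_iff.mpr hu)
    obtain ⟨s, hs1, hs2⟩ : ∃ s, 2 * w = s ∧ s % 2 = 1 := ⟨b ^ 2 * u, h, Int.odd_iff.mp ho2⟩
    omega

private lemma no_8w {w u b : ℤ} (hw : w % 2 = 1) (hu : u % 2 = 1) (h : 8 * w = b ^ 2 * u) :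
    False := by
  rcases Int.even_or_odd b with ⟨c, hc⟩ | hodd
  · have h'' : 2 * w = c ^ 2 * u := by
      have h' : 8 * w = 4 * (c ^ 2 * u) := by rw [h, hc]; ring
      obtain ⟨s, hs⟩ : ∃ s, c ^ 2 * u = s := ⟨_, rfl⟩
      rw [hs] at h' ⊢
      omega
    exact no_2w hw hu h''
  · have ho2 : Odd (b ^ 2 * u) := (hodd.pow).mul (Int.odd_iff.mpr hu)
    obtain ⟨s, hs1, hs2⟩ : ∃ s, 8 * w = s ∧ s % 2 = 1 := ⟨b ^ 2 * u, h, Int.odd_iff.mp ho2⟩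
    omega

private lemma odd_of_coprime_even {N A : ℤ} (hc : IsCoprime N A) (h2 : (2:ℤ) ∣ N) :
    A % 2 = 1 := by
  rcases Int.even_or_odd A with ⟨r, hr⟩ | ho
  · exfalso
    have hdd : (2:ℤ) ∣ A := ⟨r, by rw [hr]; ring⟩
    have := hc.isUnit_of_dvd' h2 hdd
    rw [Int.isUnit_iff] at this
    omega
  · exact Int.odd_iff.mp ho

private lemma isCoprime_four_of_odd {n : ℤ} (h : n % 2 = 1) : IsCoprime (4:ℤ) n := by
  have h2 : IsCoprime (2:ℤ) n := isCoprime_two_of_odd (Int.odd_iff.mpr h)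
  have := h2.mul_left h2
  norm_num at this
  exact this

private lemma isCoprime_eight_of_odd {n : ℤ} (h : n % 2 = 1) : IsCoprime (8:ℤ) n := by
  have h2 : IsCoprime (2:ℤ) n := isCoprime_two_of_odd (Int.odd_iff.mpr h)
  have := (h2.mul_left h2).mul_left h2
  norm_num at this
  exact this

private lemma four_decomp {X Y e : ℤ} (hXY : X * Y = 4 * e) (hY : Y % 2 = 1) :
    ∃ k, X = 4 * k ∧ k * Y = e := by
  have h4 : (4:ℤ) ∣ X := by
    refine (isCoprime_four_of_odd hY).dvd_of_dvd_mul_right ?_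
    exact ⟨e, hXY⟩
  obtain ⟨k, hk⟩ := h4
  refine ⟨k, hk, ?_⟩
  have : 4 * (k * Y) = 4 * e := by rw [← hXY, hk]; ring
  omega

private lemma eight_decomp {X Y e m' : ℤ} (hXY : X * Y = 4 * e) (he2 : e = 2 * m')
    (hm' : m' % 2 = 1) (hY : Y % 2 = 1) : ∃ k, X = 8 * k ∧ k * Y = m' ∧ k % 2 = 1 := by
  have h8 : (8:ℤ) ∣ X := by
    refine (isCoprime_eight_of_odd hY).dvd_of_dvd_mul_right ?_
    exact ⟨m', by rw [hXY, he2]; ring⟩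
  obtain ⟨k, hk⟩ := h8
  have h8k : 8 * (k * Y) = 8 * m' := by
    rw [show (8:ℤ) * (k * Y) = (8 * k) * Y from by ring, ← hk, hXY, he2]; ring
  have hkY : k * Y = m' := by omega
  refine ⟨k, hk, hkY, ?_⟩
  have hmul : (k * Y) % 2 = (k % 2 * (Y % 2)) % 2 := Int.mul_emod _ _ 2
  rw [hY, mul_one] at hmul
  omega

private lemma mixed_case_odd {P Qe Q'' e m' Δ bz : ℤ} (hprod2 : Qe * Q'' = 4 * e)
    (he2 : e = 2 * m') (hm' : m' % 2 = 1) (hQ'' : Q'' % 2 = 1) (hP : P % 2 = 1)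
    (hNeq : P * Qe = bz ^ 2 * Δ) (hΔ : Δ % 2 = 1) : False := by
  obtain ⟨k, hk, hkY, hkodd⟩ := eight_decomp hprod2 he2 hm' hQ''
  have hw : (P * k) % 2 = 1 := by
    have hmul := Int.mul_emod P k 2
    rw [hP, hkodd] at hmul
    omega
  have heq : 8 * (P * k) = bz ^ 2 * Δ := by
    rw [show (8:ℤ) * (P * k) = P * (8 * k) from by ring, ← hk, hNeq]
  exact no_8w hw hΔ heq

private lemma mixed_case_e3 {P Qe Q'' e u bz : ℤ} (hprod2 : Qe * Q'' = 4 * e)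
    (heodd : e % 2 = 1) (hQ'' : Q'' % 2 = 1) (hP : P % 2 = 1)
    (hNeq : P * Qe = bz ^ 2 * (2 * u)) (hu : u % 2 = 1) : False := by
  obtain ⟨k, hk, hkY⟩ := four_decomp hprod2 hQ''
  have hkodd : k % 2 = 1 := by
    have hmul := Int.mul_emod k Q'' 2
    rw [hQ'', mul_one, hkY] at hmul
    omega
  have hw : (P * k) % 2 = 1 := by
    have hmul := Int.mul_emod P k 2
    rw [hP, hkodd] at hmul
    omega
  have heq2 : 2 * (P * k) = bz ^ 2 * u := by
    have heq : 4 * (P * k) = 2 * (bz ^ 2 * u) := by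
      rw [show (4:ℤ) * (P * k) = (P * (4 * k)) from by ring, ← hk, hNeq]; ring
    obtain ⟨s, hs⟩ : ∃ s, bz ^ 2 * u = s := ⟨_, rfl⟩
    rw [hs] at heq ⊢
    omega
  exact no_2w hw hu heq2

private lemma mixed_case_even {P Q'' Qe e m' u bz : ℤ} (hprod2 : Qe * Q'' = 4 * e)
    (he2 : e = 2 * m') (hm' : m' % 2 = 1) (hQ'' : Q'' % 2 = 1) (hQ''4 : Q'' % 4 = 0 ∨ Q'' % 4 = 1)
    (hP : P % 2 = 1) (hP4 : P % 4 = 0 ∨ P % 4 = 1)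
    (hNeq : P * Qe = bz ^ 2 * (2 * u)) (hu : u % 2 = 1) : u % 4 = m' % 4 := by
  obtain ⟨k, hk, hkY, hkodd⟩ := eight_decomp hprod2 he2 hm' hQ''
  have heq : 8 * (P * k) = bz ^ 2 * (2 * u) := by
    rw [show (8:ℤ) * (P * k) = P * (8 * k) from by ring, ← hk, hNeq]
  rcases Int.even_or_odd bz with ⟨c, hc⟩ | hodd
  · have heq2 : P * k = c ^ 2 * u := by
      have h8 : 8 * (P * k) = 8 * (c ^ 2 * u) := by rw [heq, hc]; ring
      obtain ⟨s, hs⟩ : ∃ s, c ^ 2 * u = s := ⟨_, rfl⟩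
      rw [hs] at h8 ⊢
      omega
    have hcodd : c % 2 = 1 := by
      rcases Int.even_or_odd c with ⟨d, hd⟩ | ho
      · exfalso
        have h4 : P * k = 4 * (d ^ 2 * u) := by rw [heq2, hd]; ring
        have hPk : (P * k) % 2 = (P % 2 * (k % 2)) % 2 := Int.mul_emod _ _ 2
        rw [hP, hkodd, mul_one] at hPk
        obtain ⟨s, hs⟩ : ∃ s, d ^ 2 * u = s := ⟨_, rfl⟩
        rw [hs] at h4
        omega
      · exact Int.odd_iff.mp ho
    obtain ⟨S, hS⟩ : ∃ s, c ^ 2 = s := ⟨_, rfl⟩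
    have hc8 : S % 8 = 1 := by rw [← hS]; exact odd_sq_mod8 hcodd
    rw [hS] at heq2
    have hcu4 : (S * u) % 4 = (S % 4 * (u % 4)) % 4 := Int.mul_emod _ _ 4
    rw [show S % 4 = 1 from by omega, one_mul] at hcu4
    have hP41 : P % 4 = 1 := by omega
    have hQ''41 : Q'' % 4 = 1 := by omega
    have hPk4 : (P * k) % 4 = (P % 4 * (k % 4)) % 4 := Int.mul_emod _ _ 4
    rw [hP41, one_mul] at hPk4
    have hm'4 : m' % 4 = (k % 4 * (Q'' % 4)) % 4 := by rw [← hkY]; exact Int.mul_emod _ _ 4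
    rw [hQ''41, mul_one] at hm'4
    omega
  · exfalso
    have ho2 : Odd (bz ^ 2 * u) := (hodd.pow).mul (Int.odd_iff.mpr hu)
    obtain ⟨s, hs1, hs2⟩ : ∃ s, 8 * (P * k) = 2 * s ∧ s % 2 = 1 :=
      ⟨bz ^ 2 * u, by rw [heq]; ring, Int.odd_iff.mp ho2⟩
    omega

private lemma sqfree_part_dvd {N M D0 : ℤ} (hN : N ≠ 0) (hM : M ≠ 0) (hNM : N * M = D0 ^ 2)
    {a b : ℕ} (hab : b ^ 2 * a = N.natAbs) (hsa : Squarefree a) : (a : ℤ) ∣ M := by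
  have nN0 : N.natAbs ≠ 0 := Int.natAbs_ne_zero.mpr hN
  have nM0 : M.natAbs ≠ 0 := Int.natAbs_ne_zero.mpr hM
  have ha0 : a ≠ 0 := by rintro rfl; simp at hab; omega
  have hb0 : b ≠ 0 := by rintro rfl; simp at hab; omega
  have hprod : N.natAbs * M.natAbs = D0.natAbs ^ 2 := by
    rw [← Int.natAbs_mul, hNM, Int.natAbs_pow]
  have hdvd : a ∣ M.natAbs := by
    rw [← Nat.factorization_le_iff_dvd ha0 nM0]
    rw [Finsupp.le_def]
    intro p
    by_cases hp : a.factorization p = 0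
    · simp [hp]
    · have h1 : a.factorization p = 1 :=
        le_antisymm (hsa.natFactorization_le_one p) (by omega)
      have hfN : N.natAbs.factorization p = 2 * b.factorization p + a.factorization p := by
        rw [← hab, Nat.factorization_mul (pow_ne_zero 2 hb0) ha0, Nat.factorization_pow]
        simp [mul_comm]
      have hfP : N.natAbs.factorization p + M.natAbs.factorization p
          = 2 * D0.natAbs.factorization p := by
        have hh : (N.natAbs * M.natAbs).factorization p
            = N.natAbs.factorization p + M.natAbs.factorization p := by
          rw [Nat.factorization_mul nN0 nM0]; simp
        have hh2 : (D0.natAbs ^ 2).factorization p = 2 * D0.natAbs.factorization p := by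
          rw [Nat.factorization_pow]; simp [mul_comm]
        rw [hprod, hh2] at hh
        omega
      omega
  exact Int.dvd_natAbs.mp (Int.ofNat_dvd.mpr hdvd)
private lemma not_both_even {D0 e X Y : ℤ} (hprod : D0 = X * Y)
    (hX4 : X % 4 = 0 ∨ X % 4 = 1) (hY4 : Y % 4 = 0 ∨ Y % 4 = 1)
    (he : D0 = 4 * e) (he4 : e % 4 = 2 ∨ e % 4 = 3) : X % 2 = 1 ∨ Y % 2 = 1 := by
  by_contra hcon
  push_neg at hcon
  obtain ⟨hc1, hc2⟩ := hcon
  have h41 : (4:ℤ) ∣ X := by rcases hX4 with h | h <;> omega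
  have h42 : (4:ℤ) ∣ Y := by rcases hY4 with h | h <;> omega
  obtain ⟨x1, hx1⟩ := h41
  obtain ⟨x2, hx2⟩ := h42
  have h16 : 4 * e = 16 * (x1 * x2) := by rw [← he, hprod, hx1, hx2]; ring
  omega


set_option maxHeartbeats 1600000 in
/-- Well-definedness of the genus character: for `Q = [A,B,C]` of discriminant `D₀D`
with `D₀ < 0` a fundamental discriminant and `D > 0` a discriminant, the value
`(D₀'/A)(D₀''/C)` is independent of the factorization `D₀ = D₀'D₀''` into
discriminants with `gcd(D₀',A) = gcd(D₀'',C) = 1`. -/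
theorem genus_character_well_defined (D0 D A B C D0' D0'' E0' E0'' : ℤ)
    (hD0neg : D0 < 0)
    (hD0disc : D0 % 4 = 0 ∨ D0 % 4 = 1)
    (hfund : (Odd D0 ∧ Squarefree D0) ∨
      ∃ e : ℤ, D0 = 4 * e ∧ Squarefree e ∧ (e % 4 = 2 ∨ e % 4 = 3))
    (hDpos : 0 < D) (hDdisc : D % 4 = 0 ∨ D % 4 = 1)
    (hQ : B ^ 2 - 4 * A * C = D0 * D)
    (h1 : D0 = D0' * D0'')
    (h1' : D0' % 4 = 0 ∨ D0' % 4 = 1) (h1'' : D0'' % 4 = 0 ∨ D0'' % 4 = 1)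
    (h1A : Int.gcd D0' A = 1) (h1C : Int.gcd D0'' C = 1)
    (h2 : D0 = E0' * E0'')
    (h2' : E0' % 4 = 0 ∨ E0' % 4 = 1) (h2'' : E0'' % 4 = 0 ∨ E0'' % 4 = 1)
    (h2A : Int.gcd E0' A = 1) (h2C : Int.gcd E0'' C = 1) :
    kronecker D0' A * kronecker D0'' C = kronecker E0' A * kronecker E0'' C := by
  have hD0ne : D0 ≠ 0 := ne_of_lt hD0neg
  have hACpos : 0 < A * C := by
    nlinarith [sq_nonneg B, mul_neg_of_neg_of_pos hD0neg hDpos, hQ]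
  have hA : A ≠ 0 := by rintro rfl; rw [zero_mul] at hACpos; exact lt_irrefl 0 hACpos
  have hC : C ≠ 0 := by rintro rfl; rw [mul_zero] at hACpos; exact lt_irrefl 0 hACpos
  have hD0'ne : D0' ≠ 0 := by rintro rfl; rw [zero_mul] at h1; exact hD0ne h1
  have hD0''ne : D0'' ≠ 0 := by rintro rfl; rw [mul_zero] at h1; exact hD0ne h1
  have hE0'ne : E0' ≠ 0 := by rintro rfl; rw [zero_mul] at h2; exact hD0ne h2
  have hE0''ne : E0'' ≠ 0 := by rintro rfl; rw [mul_zero] at h2; exact hD0ne h2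
  have c1A : IsCoprime D0' A := Int.isCoprime_iff_gcd_eq_one.mpr h1A
  have c1C : IsCoprime D0'' C := Int.isCoprime_iff_gcd_eq_one.mpr h1C
  have c2A : IsCoprime E0' A := Int.isCoprime_iff_gcd_eq_one.mpr h2A
  have c2C : IsCoprime E0'' C := Int.isCoprime_iff_gcd_eq_one.mpr h2C
  set N := D0' * E0' with hN
  set M := D0'' * E0'' with hM
  have hNM : N * M = D0 ^ 2 := by
    rw [hN, hM]
    calc (D0' * E0') * (D0'' * E0'') = (D0' * D0'') * (E0' * E0'') := by ring
      _ = D0 * D0 := by rw [← h1, ← h2]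
      _ = D0 ^ 2 := by ring
  have hNne : N ≠ 0 := mul_ne_zero hD0'ne hE0'ne
  have hMne : M ≠ 0 := mul_ne_zero hD0''ne hE0''ne
  have cNA : IsCoprime N A := c1A.mul_left c2A
  have cMC : IsCoprime M C := c1C.mul_left c2C
  obtain ⟨a, b, hab, hsa⟩ := Nat.sq_mul_squarefree N.natAbs
  have hnN0 : N.natAbs ≠ 0 := Int.natAbs_ne_zero.mpr hNne
  have ha0 : a ≠ 0 := by rintro rfl; rw [mul_zero] at hab; exact hnN0 hab.symm
  have hb0 : b ≠ 0 := by
    rintro rfl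
    rw [show (0:ℕ)^2 = 0 from rfl, zero_mul] at hab
    exact hnN0 hab.symm
  have hbne : ((b:ℕ):ℤ) ≠ 0 := Int.natCast_ne_zero.mpr hb0
  set Δ : ℤ := if 0 < N then (a:ℤ) else -(a:ℤ) with hΔdef
  have hΔne : Δ ≠ 0 := by
    rw [hΔdef]
    split <;> simp [Int.natCast_ne_zero.mpr ha0, ha0]
  have hNΔ : N = (b:ℤ)^2 * Δ := by
    rcases hNne.lt_or_gt with hneg | hpos
    · rw [hΔdef, if_neg (not_lt.mpr hneg.le)]
      have habs : ((N.natAbs : ℕ) : ℤ) = -N := by omega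
      have h' : ((b:ℤ)^2 * (a:ℤ)) = -N := by rw [← habs, ← hab]; push_cast; ring
      linarith [h']
    · rw [hΔdef, if_pos hpos]
      have habs : ((N.natAbs : ℕ) : ℤ) = N := by omega
      rw [← habs, ← hab]; push_cast; ring
  have haM : ((a:ℕ):ℤ) ∣ M := sqfree_part_dvd hNne hMne hNM hab hsa
  have hΔM : Δ ∣ M := by
    rw [hΔdef]; split
    · exact haM
    · exact (neg_dvd).mpr haM
  have hΔN : Δ ∣ N := ⟨(b:ℤ)^2, by rw [hNΔ]; ring⟩
  have hbN : ((b:ℕ):ℤ) ∣ N := ⟨(b:ℤ) * Δ, by rw [hNΔ]; ring⟩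
  have hbΔD0 : (b:ℤ) * Δ ∣ D0 := by
    have hsq : ((b:ℤ) * Δ)^2 ∣ D0^2 := by
      have heq : ((b:ℤ) * Δ)^2 = N * Δ := by rw [hNΔ]; ring
      rw [heq, ← hNM]
      exact mul_dvd_mul_left N hΔM
    exact (Int.pow_dvd_pow_iff two_ne_zero).mp hsq
  obtain ⟨t, ht⟩ := hbΔD0
  have hMt : M = t^2 * Δ := by
    have h3 : N * M = N * (t^2 * Δ) := by rw [hNM, ht, hNΔ]; ring
    exact mul_left_cancel₀ hNne h3
  have htM : t ∣ M := ⟨t * Δ, by rw [hMt]; ring⟩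
  have hΔD0 : Δ ∣ D0 := dvd_trans (dvd_mul_left Δ (b:ℤ)) ⟨t, ht⟩
  have htne : t ≠ 0 := by
    rintro rfl
    rw [show ((0:ℤ))^2 = 0 from rfl, zero_mul] at hMt
    exact hMne hMt
  have cΔA : IsCoprime Δ A := IsCoprime.of_isCoprime_of_dvd_left cNA hΔN
  have cΔC : IsCoprime Δ C := IsCoprime.of_isCoprime_of_dvd_left cMC hΔM
  have cbA : IsCoprime ((b:ℕ):ℤ) A := IsCoprime.of_isCoprime_of_dvd_left cNA hbN
  have ctC : IsCoprime t C := IsCoprime.of_isCoprime_of_dvd_left cMC htM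
  have cΔAC : IsCoprime Δ (A * C) := cΔA.mul_right cΔC
  -- reductions
  have hkN : kronecker N A = kronecker Δ A := by
    have hN' : N = (b:ℤ) * ((b:ℤ) * Δ) := by rw [hNΔ]; ring
    rw [hN', kronecker_mul_left hbne (mul_ne_zero hbne hΔne) hA,
      kronecker_mul_left hbne hΔne hA, ← mul_assoc]
    have hsq : kronecker (b:ℤ) A * kronecker (b:ℤ) A = 1 := by
      rw [← pow_two]
      exact kronecker_sq_eq_one (Int.isCoprime_iff_gcd_eq_one.mp cbA) hA
    rw [hsq, one_mul]
  have hkM : kronecker M C = kronecker Δ C := by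
    have hM' : M = t * (t * Δ) := by rw [hMt]; ring
    rw [hM', kronecker_mul_left htne (mul_ne_zero htne hΔne) hC,
      kronecker_mul_left htne hΔne hC, ← mul_assoc]
    have hsq : kronecker t C * kronecker t C = 1 := by
      rw [← pow_two]
      exact kronecker_sq_eq_one (Int.isCoprime_iff_gcd_eq_one.mp ctC) hC
    rw [hsq, one_mul]
  -- the main claim
  have key : kronecker Δ (A * C) = 1 := by
    have hN4 : N % 4 = 0 ∨ N % 4 = 1 := by
      have hmm : N % 4 = (D0' % 4 * (E0' % 4)) % 4 := by rw [hN]; exact Int.mul_emod _ _ 4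
      rcases h1' with h | h <;> rcases h2' with h' | h' <;> rw [h, h'] at hmm <;>
        norm_num at hmm <;> omega
    have hM4 : M % 4 = 0 ∨ M % 4 = 1 := by
      have hmm : M % 4 = (D0'' % 4 * (E0'' % 4)) % 4 := by rw [hM]; exact Int.mul_emod _ _ 4
      rcases h1'' with h | h <;> rcases h2'' with h' | h' <;> rw [h, h'] at hmm <;>
        norm_num at hmm <;> omega
    have hACodd' : A % 2 = 1 → C % 2 = 1 → (A * C) % 2 = 1 := by
      intro hA' hC'
      have hmm := Int.mul_emod A C 2
      rw [hA', hC'] at hmm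
      omega
    rcases Int.even_or_odd Δ with hΔev | hΔodd
    · -- Δ even
      obtain ⟨r, hr⟩ := hΔev
      set u := r with hudef
      have hu2 : Δ = 2 * u := by omega
      have h4a : ¬ ((4:ℕ) ∣ a) := by
        intro hdd
        have h22 : (2 * 2 : ℕ) ∣ a := by rwa [show (2 * 2 : ℕ) = 4 from rfl]
        have := hsa 2 h22
        rw [Nat.isUnit_iff] at this
        norm_num at this
      have huodd : u % 2 = 1 := by
        rcases Int.emod_two_eq u with h | h
        · exfalso
          have h4Δ : (4:ℤ) ∣ Δ := by omega
          have h4a' : (4:ℤ) ∣ ((a:ℕ):ℤ) := by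
            rw [hΔdef] at h4Δ
            split at h4Δ
            · exact h4Δ
            · exact (dvd_neg).mp h4Δ
          exact h4a (by exact_mod_cast h4a')
        · exact h
      have h2D0 : (2:ℤ) ∣ D0 := dvd_trans ⟨u, hu2⟩ hΔD0
      obtain ⟨e, he, -, he4⟩ : ∃ e, D0 = 4 * e ∧ Squarefree e ∧ (e % 4 = 2 ∨ e % 4 = 3) := by
        rcases hfund with ⟨ho, -⟩ | h
        · exfalso; have := Int.odd_iff.mp ho; omega
        · exact h
      have h2N : (2:ℤ) ∣ N := dvd_trans ⟨u, hu2⟩ hΔN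
      have h2M : (2:ℤ) ∣ M := dvd_trans ⟨u, hu2⟩ hΔM
      have h4N : (4:ℤ) ∣ N := by omega
      have h4M : (4:ℤ) ∣ M := by omega
      have hAodd : A % 2 = 1 := odd_of_coprime_even cNA h2N
      have hCodd : C % 2 = 1 := odd_of_coprime_even cMC h2M
      have hACodd : (A * C) % 2 = 1 := hACodd' hAodd hCodd
      have hpair1 : D0' % 2 = 1 ∨ D0'' % 2 = 1 := not_both_even h1 h1' h1'' he he4
      have hpair2 : E0' % 2 = 1 ∨ E0'' % 2 = 1 := not_both_even h2 h2' h2'' he he4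
      have hNb : D0' * E0' = (b:ℤ)^2 * (2 * u) := by rw [← hN, ← hu2]; exact hNΔ
      have hfinal : ∀ m' : ℤ, e = 2 * m' → m' % 2 = 1 → u % 4 = m' % 4 →
          kronecker Δ (A * C) = 1 := by
        intro m' he2 hm'odd hum
        have hB2 : B^2 = 4*A*C + D0*D := by linarith [hQ]
        have h2B2 : (2:ℤ) ∣ B^2 := ⟨2*A*C + 2*e*D, by rw [hB2, he]; ring⟩
        have hBev : B % 2 = 0 := by have := Int.prime_two.dvd_of_dvd_pow h2B2; omega
        obtain ⟨x, hx⟩ : ∃ x, B = 2*x := ⟨B/2, by omega⟩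
        have h' := hQ
        rw [hx, he] at h'
        have h'' : 4*(x^2 - A*C) = 4*(e*D) := by linear_combination h'
        have hxn : x^2 - A*C = e*D := by
          obtain ⟨s, hs⟩ : ∃ s, x^2 - A*C = s := ⟨_, rfl⟩
          obtain ⟨s2, hs2⟩ : ∃ s2, e*D = s2 := ⟨_, rfl⟩
          rw [hs, hs2] at h'' ⊢
          omega
        have hum' : u ∣ m' := by
          obtain ⟨s, hs⟩ := hΔD0
          have h8m : 8*m' = 2*(u*s) := by
            rw [show (2:ℤ)*(u*s) = (2*u)*s from by ring, ← hu2, ← hs, he, he2]; ring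
          have h4m : u ∣ 4*m' := ⟨s, by omega⟩
          exact (isCoprime_four_of_odd huodd).symm.dvd_of_dvd_mul_left h4m
        have hue : u ∣ x^2 - A*C := by
          rw [hxn, he2]
          exact ((hum'.mul_left 2).mul_right D)
        have hxodd : x % 2 = 1 := by
          rcases Int.emod_two_eq x with hxe | hxe
          · exfalso
            obtain ⟨c, hc⟩ : ∃ c, x = 2*c := ⟨x/2, by omega⟩
            have hsq4 : x^2 = 4*c^2 := by rw [hc]; ring
            have hthis := hxn
            rw [hsq4, he2] at hthis
            have hlin : 4*(c^2) - A*C = 2*(m'*D) := by linear_combination hthis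
            obtain ⟨s, hs⟩ : ∃ s, c^2 = s := ⟨_, rfl⟩
            obtain ⟨s2, hs2⟩ : ∃ s2, m'*D = s2 := ⟨_, rfl⟩
            rw [hs, hs2] at hlin
            omega
          · exact hxe
        have hx8 : x^2 % 8 = 1 := odd_sq_mod8 hxodd
        obtain ⟨q, hq⟩ : (4:ℤ) ∣ (u - m') := by omega
        have hkey : A*C + 2*u*D = x^2 + 8*(q*D) := by
          linear_combination -hxn + 2*D*hq - D*he2
        have hcong : (A*C + 2*u*D) % 8 = 1 := by
          rw [hkey]
          obtain ⟨s, hs⟩ : ∃ s, x^2 = s := ⟨_, rfl⟩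
          obtain ⟨s2, hs2⟩ : ∃ s2, q*D = s2 := ⟨_, rfl⟩
          rw [hs, hs2]
          rw [hs] at hx8
          omega
        have hcop2u : IsCoprime (2*u) (A*C) := by rw [← hu2]; exact cΔAC
        have hres := final_even (Int.odd_iff.mpr huodd) hACpos hcop2u hue hDdisc hcong
        rw [hu2]
        exact hres
      rcases Int.emod_two_eq D0' with hp1 | hp1 <;> rcases Int.emod_two_eq E0' with hp2 | hp2
      · -- both even: M odd, contradiction
        exfalso
        have hq1 : D0'' % 2 = 1 := by rcases hpair1 with h | h <;> omega
        have hq2 : E0'' % 2 = 1 := by rcases hpair2 with h | h <;> omega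
        have hModd : M % 2 = 1 := by
          have hmm := Int.mul_emod D0'' E0'' 2
          rw [hq1, hq2] at hmm
          rw [hM]
          omega
        omega
      · -- D0' even, E0' odd
        have hq1 : D0'' % 2 = 1 := by rcases hpair1 with h | h <;> omega
        rcases he4 with h2e | h3e
        · obtain ⟨m', he2, hm'odd⟩ : ∃ m', e = 2*m' ∧ m' % 2 = 1 := ⟨e/2, by omega, by omega⟩
          exact hfinal m' he2 hm'odd
            (mixed_case_even (by rw [← h1]; exact he) he2 hm'odd hq1 h1'' hp2 h2'
              (by rw [mul_comm]; exact hNb) huodd)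
        · exact absurd (mixed_case_e3 (by rw [← h1]; exact he) (by omega) hq1 hp2
            (by rw [mul_comm]; exact hNb) huodd) (fun h => h)
      · -- D0' odd, E0' even
        have hq2 : E0'' % 2 = 1 := by rcases hpair2 with h | h <;> omega
        rcases he4 with h2e | h3e
        · obtain ⟨m', he2, hm'odd⟩ : ∃ m', e = 2*m' ∧ m' % 2 = 1 := ⟨e/2, by omega, by omega⟩
          exact hfinal m' he2 hm'odd
            (mixed_case_even (by rw [← h2]; exact he) he2 hm'odd hq2 h2'' hp1 h1' hNb huodd)
        · exact absurd (mixed_case_e3 (by rw [← h2]; exact he) (by omega) hq2 hp1 hNb huodd)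
            (fun h => h)
      · -- both odd: N odd, contradiction
        exfalso
        have hNodd : N % 2 = 1 := by
          have hmm := Int.mul_emod D0' E0' 2
          rw [hp1, hp2] at hmm
          rw [hN]
          omega
        omega
    · -- Δ odd
      have hΔ2 : Δ % 2 = 1 := Int.odd_iff.mp hΔodd
      rcases (by omega : Δ % 4 = 1 ∨ Δ % 4 = 3) with h41 | h43
      · refine final_one_mod_four (x := B) h41 hACpos cΔAC ?_
        have hdd : Δ ∣ D0 * D := hΔD0.mul_right D
        rw [← hQ] at hdd
        have heq : B^2 - 4*A*C = B^2 - 4*(A*C) := by ring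
        rwa [heq] at hdd
      · -- Δ ≡ 3 mod 4
        have h4N : (4:ℤ) ∣ N := by
          have hNmod : N % 4 = ((b:ℤ)^2 % 4 * (Δ % 4)) % 4 := by
            rw [hNΔ]; exact Int.mul_emod _ _ 4
          rw [h43] at hNmod
          have hbsq := sq_mod4 ((b:ℕ):ℤ)
          obtain ⟨s, hs⟩ : ∃ s, ((b:ℤ))^2 = s := ⟨_, rfl⟩
          rw [hs] at hNmod hbsq
          omega
        have h4M : (4:ℤ) ∣ M := by
          have hMmod : M % 4 = (t^2 % 4 * (Δ % 4)) % 4 := by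
            rw [hMt]; exact Int.mul_emod _ _ 4
          rw [h43] at hMmod
          have htsq := sq_mod4 t
          obtain ⟨s, hs⟩ : ∃ s, t^2 = s := ⟨_, rfl⟩
          rw [hs] at hMmod htsq
          omega
        have hAodd : A % 2 = 1 := odd_of_coprime_even cNA (dvd_trans ⟨2, by norm_num⟩ h4N)
        have hCodd : C % 2 = 1 := odd_of_coprime_even cMC (dvd_trans ⟨2, by norm_num⟩ h4M)
        have hACodd : (A * C) % 2 = 1 := hACodd' hAodd hCodd
        have h4D0 : (4:ℤ) ∣ D0 := by
          have h16 : (4:ℤ)^2 ∣ D0^2 := by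
            rw [← hNM]
            have hmd := mul_dvd_mul h4N h4M
            rwa [show ((4:ℤ))*4 = 4^2 from by norm_num] at hmd
          exact (Int.pow_dvd_pow_iff two_ne_zero).mp h16
        obtain ⟨e, he, -, he4⟩ : ∃ e, D0 = 4 * e ∧ Squarefree e ∧ (e % 4 = 2 ∨ e % 4 = 3) := by
          rcases hfund with ⟨ho, -⟩ | h
          · exfalso; have := Int.odd_iff.mp ho; omega
          · exact h
        have hpair1 : D0' % 2 = 1 ∨ D0'' % 2 = 1 := not_both_even h1 h1' h1'' he he4
        have hpair2 : E0' % 2 = 1 ∨ E0'' % 2 = 1 := not_both_even h2 h2' h2'' he he4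
        have he3 : e % 4 = 3 := by
          rcases he4 with h2e | h3e
          · exfalso
            obtain ⟨m', he2, hm'odd⟩ : ∃ m', e = 2*m' ∧ m' % 2 = 1 := ⟨e/2, by omega, by omega⟩
            rcases Int.emod_two_eq D0' with hp1 | hp1 <;>
              rcases Int.emod_two_eq E0' with hp2 | hp2
            · have hq1 : D0'' % 2 = 1 := by rcases hpair1 with h | h <;> omega
              have hq2 : E0'' % 2 = 1 := by rcases hpair2 with h | h <;> omega
              have hModd : M % 2 = 1 := by
                have hmm := Int.mul_emod D0'' E0'' 2
                rw [hq1, hq2] at hmm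
                rw [hM]
                omega
              omega
            · have hq1 : D0'' % 2 = 1 := by rcases hpair1 with h | h <;> omega
              exact mixed_case_odd (by rw [← h1]; exact he) he2 hm'odd hq1 hp2
                (by rw [mul_comm, ← hN]; exact hNΔ) hΔ2
            · have hq2 : E0'' % 2 = 1 := by rcases hpair2 with h | h <;> omega
              exact mixed_case_odd (by rw [← h2]; exact he) he2 hm'odd hq2 hp1
                (by rw [← hN]; exact hNΔ) hΔ2
            · have hNodd : N % 2 = 1 := by
                have hmm := Int.mul_emod D0' E0' 2
                rw [hp1, hp2] at hmm
                rw [hN]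
                omega
              omega
          · exact h3e
        have hB2 : B^2 = 4*A*C + D0*D := by linarith [hQ]
        have h2B2 : (2:ℤ) ∣ B^2 := ⟨2*A*C + 2*e*D, by rw [hB2, he]; ring⟩
        have hBev : B % 2 = 0 := by have := Int.prime_two.dvd_of_dvd_pow h2B2; omega
        obtain ⟨x, hx⟩ : ∃ x, B = 2*x := ⟨B/2, by omega⟩
        have h' := hQ
        rw [hx, he] at h'
        have h'' : 4*(x^2 - A*C) = 4*(e*D) := by linear_combination h'
        have hxn : x^2 - A*C = e*D := by
          obtain ⟨s, hs⟩ : ∃ s, x^2 - A*C = s := ⟨_, rfl⟩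
          obtain ⟨s2, hs2⟩ : ∃ s2, e*D = s2 := ⟨_, rfl⟩
          rw [hs, hs2] at h'' ⊢
          omega
        have hΔe : Δ ∣ e :=
          (isCoprime_four_of_odd hΔ2).symm.dvd_of_dvd_mul_left (by rw [← he]; exact hΔD0)
        have hdvd2 : Δ ∣ x^2 - A*C := by rw [hxn]; exact hΔe.mul_right D
        have hAC4 : (A*C) % 4 = 1 := by
          have hsq := sq_mod4 x
          obtain ⟨s, hs⟩ : ∃ s, x^2 = s := ⟨_, rfl⟩
          obtain ⟨s2, hs2⟩ : ∃ s2, e*D = s2 := ⟨_, rfl⟩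
          have heD4 : s2 % 4 = (3 * (D % 4)) % 4 := by rw [← hs2, Int.mul_emod, he3]
          have hxn' : s - A*C = s2 := by rw [← hs, ← hs2]; exact hxn
          rw [hs] at hsq
          rcases hDdisc with h | h <;> rw [h] at heD4 <;> norm_num at heD4 <;> omega
        exact final_three_mod_four h43 hACpos hAC4 cΔAC hdvd2
  have key2 : kronecker Δ A * kronecker Δ C = 1 := by
    have hsame : (A < 0 ∧ Δ < 0) ↔ (C < 0 ∧ Δ < 0) := by
      constructor <;> rintro ⟨h, h'⟩ <;> exact ⟨by nlinarith [hACpos], h'⟩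
    rw [kronecker_abs hA (a := Δ), kronecker_abs hC (a := Δ)]
    have hACabs : |A| * |C| = A * C := by rw [← abs_mul]; exact abs_of_pos hACpos
    have hmr : kronecker Δ |A| * kronecker Δ |C| = kronecker Δ (A * C) := by
      rw [← kronecker_mul_right_pos Δ (abs_pos.mpr hA) (abs_pos.mpr hC), hACabs]
    by_cases hcase : A < 0 ∧ Δ < 0
    · rw [if_pos hcase, if_pos (hsame.mp hcase)]
      calc (-1) * kronecker Δ |A| * ((-1) * kronecker Δ |C|)
          = kronecker Δ |A| * kronecker Δ |C| := by ring
        _ = 1 := by rw [hmr, key]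
    · rw [if_neg hcase, if_neg (fun h => hcase (hsame.mpr h))]
      calc 1 * kronecker Δ |A| * (1 * kronecker Δ |C|)
          = kronecker Δ |A| * kronecker Δ |C| := by ring
        _ = 1 := by rw [hmr, key]
  -- conclude
  have keyNM : kronecker N A * kronecker M C = 1 := by rw [hkN, hkM]; exact key2
  rw [hN, hM, kronecker_mul_left hD0'ne hE0'ne hA, kronecker_mul_left hD0''ne hE0''ne hC]
    at keyNM
  have u2A : kronecker E0' A ^ 2 = 1 := kronecker_sq_eq_one h2A hA
  have u2C : kronecker E0'' C ^ 2 = 1 := kronecker_sq_eq_one h2C hC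
  linear_combination (kronecker E0' A * kronecker E0'' C) * keyNM -
    (kronecker D0' A * kronecker D0'' C * kronecker E0'' C ^ 2) * u2A -
    (kronecker D0' A * kronecker D0'' C) * u2C
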